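/- Let b₀ > 0 and let F : ℝ → ℝ be Lipschitz continuous with Lipschitz constant b₀. Let x₀ ∈ ℝ, let v_n (n ∈ ℕ) and v be locally integrable functions on [0,∞), and suppose: (i) for every T > 0 and every bounded measurable g : [0,T] → ℝ, ∫₀^T v_n(t) g(t) dt → ∫₀^T v(t) g(t) dt as n → ∞; (ii) for every T ∈ ℕ there exists N_T > 0 such that 0 ≤ v_n(t) ≤ N_T for a.e. t ∈ [0,T] and all n ≥ T, and 0 ≤ v(t) ≤ N_T for a.e. t ∈ [0,T]. Let x_n and x be continuous functions on [0,∞) satisfying x_n(t) = x₀ + ∫₀^t (F(x_n(s)) + v_n(s)) ds and x(t) = x₀ + ∫₀^t (F(x(s)) + v(s)) ds for all t ≥ 0. Then x_n(t) → x(t) as n → ∞, for every t ≥ 0. -/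

import Mathlib

open MeasureTheory Filter

private lemma gronwall_aux (b T : ℝ) (hb : 0 < b) (hT : 0 < T) (φ ω : ℝ → ℝ)
    (hφc : ContinuousOn φ (Set.Icc 0 T)) (hωc : ContinuousOn ω (Set.Icc 0 T))
    (hω0 : ∀ u ∈ Set.Icc 0 T, 0 ≤ ω u)
    (hineq : ∀ u ∈ Set.Icc 0 T, φ u ≤ b * (∫ s in (0:ℝ)..u, φ s) + ω u) :
    φ T ≤ ω T + b * Real.exp (b * T) * ∫ s in (0:ℝ)..T, ω s := by
  have prim : ∀ (f : ℝ → ℝ), ContinuousOn f (Set.Icc 0 T) → ∀ u ∈ Set.Ioo (0:ℝ) T,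
      HasDerivAt (fun r => ∫ s in (0:ℝ)..r, f s) (f u) u := by
    intro f hf u hu
    apply intervalIntegral.integral_hasDerivAt_right
    · apply ContinuousOn.intervalIntegrable
      apply hf.mono
      rw [Set.uIcc_of_le hu.1.le]
      exact Set.Icc_subset_Icc le_rfl hu.2.le
    · exact ⟨Set.Ioo 0 T, isOpen_Ioo.mem_nhds hu,
        (hf.mono Set.Ioo_subset_Icc_self).aestronglyMeasurable measurableSet_Ioo⟩
    · exact hf.continuousAt (Icc_mem_nhds hu.1 hu.2)
  have primc : ∀ (f : ℝ → ℝ), ContinuousOn f (Set.Icc 0 T) →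
      ContinuousOn (fun r => ∫ s in (0:ℝ)..r, f s) (Set.Icc 0 T) := by
    intro f hf
    have h := intervalIntegral.continuousOn_primitive_interval
      (f := f) (μ := volume) (a := 0) (b := T) (by rw [Set.uIcc_of_le hT.le]; exact hf.integrableOn_Icc)
    rwa [Set.uIcc_of_le hT.le] at h
  set Φ : ℝ → ℝ := fun u => ∫ s in (0:ℝ)..u, φ s with hΦ
  set Ω : ℝ → ℝ := fun u => ∫ s in (0:ℝ)..u, ω s with hΩ
  set h : ℝ → ℝ := fun u => Ω u - Real.exp (-(b*u)) * Φ u with hh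
  have hexp : ∀ u : ℝ, HasDerivAt (fun r => Real.exp (-(b*r))) (Real.exp (-(b*u)) * (-b)) u := by
    intro u
    have h1 : HasDerivAt (fun r : ℝ => -(b*r)) (-b) u := by
      simpa [Pi.neg_def] using ((hasDerivAt_id u).const_mul b).neg
    exact h1.exp
  have hhd : ∀ u ∈ Set.Ioo (0:ℝ) T,
      HasDerivAt h (ω u - (Real.exp (-(b*u)) * (-b) * Φ u + Real.exp (-(b*u)) * φ u)) u := by
    intro u hu
    exact (prim ω hωc u hu).sub ((hexp u).mul (prim φ hφc u hu))
  have hmono : MonotoneOn h (Set.Icc 0 T) := by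
    apply monotoneOn_of_deriv_nonneg (convex_Icc 0 T)
    · exact (primc ω hωc).sub
        (((Real.continuous_exp.comp (continuous_const.mul continuous_id).neg).continuousOn).mul
          (primc φ hφc))
    · rw [interior_Icc]
      intro u hu
      exact (hhd u hu).differentiableAt.differentiableWithinAt
    · rw [interior_Icc]
      intro u hu
      rw [(hhd u hu).deriv]
      have hE0 : (0:ℝ) < Real.exp (-(b*u)) := Real.exp_pos _
      have hE1 : Real.exp (-(b*u)) ≤ 1 := by
        rw [Real.exp_le_one_iff]
        nlinarith [hu.1, hb]
      have hq := hineq u (Set.Ioo_subset_Icc_self hu)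
      have hw := hω0 u (Set.Ioo_subset_Icc_self hu)
      nlinarith [mul_le_mul_of_nonneg_left hq hE0.le]
  have h0 : h 0 = 0 := by
    simp [hh, hΩ, hΦ, intervalIntegral.integral_same]
  have hTT := hmono (Set.left_mem_Icc.mpr hT.le) (Set.right_mem_Icc.mpr hT.le) hT.le
  rw [h0] at hTT
  have hTT' : 0 ≤ Ω T - Real.exp (-(b*T)) * Φ T := hTT
  have hexpT : Real.exp (-(b*T)) * Real.exp (b*T) = 1 := by
    rw [← Real.exp_add]; ring_nf; exact Real.exp_zero
  have hΦT : Φ T ≤ Real.exp (b*T) * Ω T := by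
    have hE0 : (0:ℝ) < Real.exp (b*T) := Real.exp_pos _
    have h1 : Real.exp (-(b*T)) * Φ T ≤ Ω T := by linarith
    have h2 := mul_le_mul_of_nonneg_left h1 hE0.le
    have h3 : Real.exp (b*T) * (Real.exp (-(b*T)) * Φ T) = Φ T := by
      rw [← mul_assoc, mul_comm (Real.exp (b*T)), hexpT, one_mul]
    linarith
  have hfinal := hineq T (Set.right_mem_Icc.mpr hT.le)
  have : b * Φ T ≤ b * (Real.exp (b*T) * Ω T) := by
    exact mul_le_mul_of_nonneg_left hΦT hb.le
  calc φ T ≤ b * Φ T + ω T := hfinal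
    _ ≤ b * (Real.exp (b*T) * Ω T) + ω T := by linarith
    _ = ω T + b * Real.exp (b*T) * Ω T := by ring

/-- Pointwise convergence of trajectories associated with a locally uniformly
bounded sequence of controls converging weakly in every `L¹([0,T])`. -/
theorem trajectories_pointwise_convergence
    (b₀ : ℝ) (hb₀ : 0 < b₀) (F : ℝ → ℝ) (hF : LipschitzWith (Real.toNNReal b₀) F)
    (x₀ : ℝ) (v : ℕ → ℝ → ℝ) (vl : ℝ → ℝ)
    (hv : ∀ n : ℕ, Measurable (v n) ∧ ∀ T : ℝ, 0 < T → IntegrableOn (v n) (Set.Icc 0 T))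
    (hvl : Measurable vl ∧ ∀ T : ℝ, 0 < T → IntegrableOn vl (Set.Icc 0 T))
    (hweak : ∀ T : ℝ, 0 < T → ∀ g : ℝ → ℝ, Measurable g →
      (∃ C : ℝ, ∀ t ∈ Set.Icc (0:ℝ) T, |g t| ≤ C) →
      Tendsto (fun n => ∫ t in Set.Icc (0:ℝ) T, v n t * g t) atTop
        (nhds (∫ t in Set.Icc (0:ℝ) T, vl t * g t)))
    (hbound : ∀ T : ℕ, ∃ NT : ℝ, 0 < NT ∧
      (∀ n : ℕ, T ≤ n →
        ∀ᵐ t ∂(volume.restrict (Set.Icc (0:ℝ) (T:ℝ))), 0 ≤ v n t ∧ v n t ≤ NT) ∧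
      (∀ᵐ t ∂(volume.restrict (Set.Icc (0:ℝ) (T:ℝ))), 0 ≤ vl t ∧ vl t ≤ NT))
    (xs : ℕ → ℝ → ℝ) (x : ℝ → ℝ)
    (hxs : ∀ n : ℕ, ContinuousOn (xs n) (Set.Ici 0) ∧
      ∀ t : ℝ, 0 ≤ t → xs n t = x₀ + ∫ s in (0:ℝ)..t, (F (xs n s) + v n s))
    (hx : ContinuousOn x (Set.Ici 0) ∧
      ∀ t : ℝ, 0 ≤ t → x t = x₀ + ∫ s in (0:ℝ)..t, (F (x s) + vl s)) :
    ∀ t : ℝ, 0 ≤ t → Tendsto (fun n => xs n t) atTop (nhds (x t)) := by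
  intro t ht
  obtain ⟨hx1, hx2⟩ := hx
  rcases ht.lt_or_eq with hT | h0
  swap
  · -- t = 0 case
    have e : ∀ n, xs n (0:ℝ) = x₀ := fun n => by simpa using (hxs n).2 0 le_rfl
    have e' : x (0:ℝ) = x₀ := by simpa using hx2 0 le_rfl
    rw [← h0]
    simp only [e, e']
    exact tendsto_const_nhds
  -- main case : 0 < t
  -- interval integrability of the controls
  have hvI : ∀ (f : ℝ → ℝ), (∀ T' : ℝ, 0 < T' → IntegrableOn f (Set.Icc 0 T')) →
      ∀ u : ℝ, 0 ≤ u → IntervalIntegrable f volume 0 u := by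
    intro f hf u hu
    rcases hu.lt_or_eq with hu' | hu'
    · exact IntegrableOn.intervalIntegrable (by rw [Set.uIcc_of_le hu'.le]; exact hf u hu')
    · rw [← hu']
  have hvn : ∀ n (u : ℝ), 0 ≤ u → IntervalIntegrable (v n) volume 0 u :=
    fun n => hvI _ (hv n).2
  have hvlI : ∀ u : ℝ, 0 ≤ u → IntervalIntegrable vl volume 0 u := hvI _ hvl.2
  -- continuity and integrability of F∘trajectories
  have hFc : ∀ n, ContinuousOn (fun s => F (xs n s)) (Set.Ici 0) :=
    fun n => hF.continuous.comp_continuousOn (hxs n).1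
  have hFxc : ContinuousOn (fun s => F (x s)) (Set.Ici 0) :=
    hF.continuous.comp_continuousOn hx1
  have cont_ii : ∀ (f : ℝ → ℝ), ContinuousOn f (Set.Ici 0) →
      ∀ u : ℝ, 0 ≤ u → IntervalIntegrable f volume 0 u := by
    intro f hf u hu
    apply ContinuousOn.intervalIntegrable
    rw [Set.uIcc_of_le hu]
    exact hf.mono (fun s hs => hs.1)
  -- the weak-convergence error terms
  set w : ℕ → ℝ → ℝ := fun n u => ∫ s in (0:ℝ)..u, (v n s - vl s) with hwdef0
  have hwdef : ∀ n (u : ℝ), 0 ≤ u →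
      w n u = (∫ s in (0:ℝ)..u, v n s) - ∫ s in (0:ℝ)..u, vl s :=
    fun n u hu => intervalIntegral.integral_sub (hvn n u hu) (hvlI u hu)
  have hwc : ∀ n, ContinuousOn (w n) (Set.Icc 0 t) := by
    intro n
    have h := intervalIntegral.continuousOn_primitive_interval
      (f := fun s => v n s - vl s) (μ := volume) (a := 0) (b := t)
      (by rw [Set.uIcc_of_le hT.le]; exact ((hv n).2 t hT).sub (hvl.2 t hT))
    rwa [Set.uIcc_of_le hT.le] at h
  -- key identity for the difference
  have key : ∀ n (u : ℝ), 0 ≤ u →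
      xs n u - x u = (∫ s in (0:ℝ)..u, (F (xs n s) - F (x s))) + w n u := by
    intro n u hu
    rw [(hxs n).2 u hu, hx2 u hu,
      intervalIntegral.integral_add (cont_ii _ (hFc n) u hu) (hvn n u hu),
      intervalIntegral.integral_add (cont_ii _ hFxc u hu) (hvlI u hu),
      intervalIntegral.integral_sub (cont_ii _ (hFc n) u hu) (cont_ii _ hFxc u hu),
      hwdef n u hu]
    ring
  set φ : ℕ → ℝ → ℝ := fun n u => |xs n u - x u| with hφdef
  have hφc : ∀ n, ContinuousOn (φ n) (Set.Ici 0) := fun n => ((hxs n).1.sub hx1).abs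
  -- the integral inequality
  have hineq : ∀ n, ∀ u ∈ Set.Icc (0:ℝ) t,
      φ n u ≤ b₀ * (∫ s in (0:ℝ)..u, φ n s) + |w n u| := by
    intro n u hu
    have hlip : ∀ s ∈ Set.Icc (0:ℝ) u, |F (xs n s) - F (x s)| ≤ b₀ * φ n s := by
      intro s _
      have h := hF.dist_le_mul (xs n s) (x s)
      rw [Real.dist_eq, Real.dist_eq, Real.coe_toNNReal _ hb₀.le] at h
      exact h
    have hii1 : IntervalIntegrable (fun s => |F (xs n s) - F (x s)|) volume 0 u :=
      cont_ii _ ((hFc n).sub hFxc).abs u hu.1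
    have hii2 : IntervalIntegrable (fun s => b₀ * φ n s) volume 0 u :=
      cont_ii _ ((continuousOn_const).mul (hφc n)) u hu.1
    have h1 : |∫ s in (0:ℝ)..u, (F (xs n s) - F (x s))|
        ≤ ∫ s in (0:ℝ)..u, |F (xs n s) - F (x s)| :=
      intervalIntegral.abs_integral_le_integral_abs hu.1
    have h2 : (∫ s in (0:ℝ)..u, |F (xs n s) - F (x s)|)
        ≤ ∫ s in (0:ℝ)..u, b₀ * φ n s :=
      intervalIntegral.integral_mono_on hu.1 hii1 hii2 hlip
    have h3 : (∫ s in (0:ℝ)..u, b₀ * φ n s) = b₀ * ∫ s in (0:ℝ)..u, φ n s :=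
      intervalIntegral.integral_const_mul _ _
    calc φ n u = |(∫ s in (0:ℝ)..u, (F (xs n s) - F (x s))) + w n u| := by
          rw [hφdef]; simp only []; rw [key n u hu.1]
      _ ≤ |∫ s in (0:ℝ)..u, (F (xs n s) - F (x s))| + |w n u| := abs_add_le _ _
      _ ≤ b₀ * (∫ s in (0:ℝ)..u, φ n s) + |w n u| := by
          rw [← h3]; linarith
  -- Gronwall
  have gron : ∀ n, φ n t ≤ |w n t| + b₀ * Real.exp (b₀ * t) * ∫ s in (0:ℝ)..t, |w n s| := by
    intro n
    apply gronwall_aux b₀ t hb₀ hT (φ n) (fun u => |w n u|)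
    · exact (hφc n).mono (fun s hs => hs.1)
    · exact (hwc n).abs
    · intro u _; exact abs_nonneg _
    · exact hineq n
  -- pointwise convergence of w
  have hpt : ∀ u : ℝ, 0 < u → Tendsto (fun n => w n u) atTop (nhds 0) := by
    intro u hu
    have h1 := hweak u hu (fun _ => 1) measurable_const ⟨1, fun s _ => by norm_num⟩
    simp only [mul_one] at h1
    have e : ∀ f : ℝ → ℝ, (∫ s in (0:ℝ)..u, f s) = ∫ s in Set.Icc (0:ℝ) u, f s := by
      intro f
      rw [intervalIntegral.integral_of_le hu.le, ← MeasureTheory.integral_Icc_eq_integral_Ioc]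
    have e2 : (fun n => w n u)
        = fun n => (∫ s in Set.Icc (0:ℝ) u, v n s) - ∫ s in Set.Icc (0:ℝ) u, vl s :=
      funext fun n => by rw [hwdef n u hu.le, e, e]
    rw [e2]
    have := h1.sub (tendsto_const_nhds (α := ℕ) (x := ∫ s in Set.Icc (0:ℝ) u, vl s) (f := atTop))
    simpa using this
  -- uniform bound on w for large n
  set M : ℕ := ⌈t⌉₊ with hMdef
  have hMt : t ≤ (M : ℝ) := Nat.le_ceil t
  obtain ⟨NT, hNT0, hbd, hbdl⟩ := hbound M
  have hwb : ∀ n : ℕ, M ≤ n → ∀ u ∈ Set.Icc (0:ℝ) t, |w n u| ≤ NT * t := by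
    intro n hn u hu
    have hb1 := hbd n hn
    have hb2 := hbdl
    rw [ae_restrict_iff' measurableSet_Icc] at hb1 hb2
    have hae : ∀ᵐ s ∂(volume : Measure ℝ), s ∈ Set.uIoc (0:ℝ) u → ‖v n s - vl s‖ ≤ NT := by
      filter_upwards [hb1, hb2] with s h1 h2 hs
      rw [Set.uIoc_of_le hu.1] at hs
      have hsm : s ∈ Set.Icc (0:ℝ) (M:ℝ) := ⟨hs.1.le, hs.2.trans (hu.2.trans hMt)⟩
      obtain ⟨h1a, h1b⟩ := h1 hsm
      obtain ⟨h2a, h2b⟩ := h2 hsm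
      rw [Real.norm_eq_abs, abs_le]
      constructor <;> linarith
    have hnorm := intervalIntegral.norm_integral_le_of_norm_le_const_ae hae
    rw [Real.norm_eq_abs, sub_zero, abs_of_nonneg hu.1] at hnorm
    calc |w n u| ≤ NT * u := hnorm
      _ ≤ NT * t := mul_le_mul_of_nonneg_left hu.2 hNT0.le
  -- convergence of ∫ |w n|
  have hW : Tendsto (fun n => ∫ s in (0:ℝ)..t, |w n s|) atTop (nhds 0) := by
    rw [← tendsto_add_atTop_iff_nat M]
    have e : ∀ n : ℕ, (∫ s in (0:ℝ)..t, |w n s|) = ∫ s in Set.Ioc (0:ℝ) t, |w n s| :=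
      fun n => intervalIntegral.integral_of_le hT.le
    simp only [e]
    have hdct := MeasureTheory.tendsto_integral_of_dominated_convergence
      (μ := volume.restrict (Set.Ioc (0:ℝ) t))
      (F := fun (n : ℕ) (u : ℝ) => |w (n + M) u|) (f := fun _ => (0:ℝ))
      (bound := fun _ => NT * t)
      (fun n => ((hwc (n+M)).abs.mono Set.Ioc_subset_Icc_self).aestronglyMeasurable
        measurableSet_Ioc)
      ((integrableOn_const_iff (by finiteness)).mpr (Or.inr measure_Ioc_lt_top))
      (fun n => (ae_restrict_iff' measurableSet_Ioc).mpr (ae_of_all _ (fun u hu => by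
        rw [Real.norm_eq_abs, abs_abs]
        exact hwb (n+M) (Nat.le_add_left M n) u (Set.Ioc_subset_Icc_self hu))))
      ((ae_restrict_iff' measurableSet_Ioc).mpr (ae_of_all _ (fun u hu => by
        have h := (hpt u hu.1).comp (tendsto_add_atTop_nat M)
        simpa using h.abs)))
    simpa using hdct
  -- conclusion
  rw [tendsto_iff_dist_tendsto_zero]
  apply squeeze_zero (g := fun n => |w n t| + b₀ * Real.exp (b₀ * t) * ∫ s in (0:ℝ)..t, |w n s|)
    (fun n => dist_nonneg)
  · intro n
    rw [Real.dist_eq]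
    exact gron n
  · have h1 : Tendsto (fun n => |w n t|) atTop (nhds 0) := by
      simpa using (hpt t hT).abs
    have h2 := hW.const_mul (b₀ * Real.exp (b₀ * t))
    simpa using h1.add h2
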